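/- arXiv:2008.10058 — 3 statements merged into one kernel-verified Lean document; each statement's English description precedes it below -/
import Mathlib

section
/- Let J, E ⊂ ℝ be multi-intervals with disjoint interiors and let A: L²(J) → L²(E) be given by (Af)(x) = (1/π)∫_J f(y)/(x-y) dy. If f ∈ L²(J) satisfies Af = 0 almost everywhere on E, then f = 0. Consequently 0 is not an eigenvalue of the block operator 𝒦 = [[0, A],[A†, 0]] on L²(E)⊕L²(J). -/
open MeasureTheory

/-- A multi-interval: a finite union of closed bounded intervals. -/
def IsMultiInterval (S : Set ℝ) : Prop :=
  ∃ (n : ℕ) (a b : Fin n → ℝ), (∀ i, a i ≤ b i) ∧ S = ⋃ i, Set.Icc (a i) (b i)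

lemma IsMultiInterval.isCompact {S : Set ℝ} (h : IsMultiInterval S) : IsCompact S := by
  obtain ⟨n, a, b, -, rfl⟩ := h
  exact isCompact_iUnion fun i => isCompact_Icc

lemma IsMultiInterval.subset_interior_union_finite {S : Set ℝ} (h : IsMultiInterval S) :
    ∃ F : Set ℝ, F.Finite ∧ S ⊆ interior S ∪ F := by
  obtain ⟨n, a, b, hab, rfl⟩ := h
  refine ⟨(⋃ i, {a i, b i}), Set.finite_iUnion fun i => (Set.finite_singleton _).insert _, ?_⟩
  intro x hx
  simp only [Set.mem_iUnion] at hx ⊢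
  obtain ⟨i, hi⟩ := hx
  by_cases hx' : x ∈ Set.Ioo (a i) (b i)
  · left
    apply interior_mono (Set.subset_iUnion (fun i => Set.Icc (a i) (b i)) i)
    rw [interior_Icc]; exact hx'
  · right
    refine Set.mem_iUnion.2 ⟨i, ?_⟩
    rcases eq_or_lt_of_le hi.1 with h1 | h1
    · exact Or.inl h1.symm
    rcases eq_or_lt_of_le hi.2 with h2 | h2
    · exact Or.inr h2
    exact absurd ⟨h1, h2⟩ hx'

/-- The complement in `ℂ` of a compact subset of the real line is preconnected. -/
lemma preconnected_compl_real {J : Set ℝ} (hJ : IsCompact J) :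
    IsPreconnected ((Complex.ofReal '' J)ᶜ) := by
  obtain ⟨r, hr⟩ := hJ.isBounded.subset_closedBall 0
  set P : Set ℂ := {z | 0 < z.im} with hP_def
  set N : Set ℂ := {z | z.im < 0} with hN_def
  set R : Set ℂ := {z | r < z.re} with hR_def
  have habs : ∀ y ∈ J, |y| ≤ r := by
    intro y hy
    have := hr hy
    rwa [Metric.mem_closedBall, Real.dist_eq, sub_zero] at this
  have hsub : P ∪ R ∪ N ⊆ (Complex.ofReal '' J)ᶜ := by
    rintro z hz ⟨y, hy, rfl⟩
    have hyr := abs_le.mp (habs y hy)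
    rcases hz with (h | h) | h
    · simp only [hP_def, Set.mem_setOf_eq, Complex.ofReal_im, lt_self_iff_false] at h
    · simp only [hR_def, Set.mem_setOf_eq, Complex.ofReal_re] at h
      linarith [hyr.2]
    · simp only [hN_def, Set.mem_setOf_eq, Complex.ofReal_im, lt_self_iff_false] at h
  have hT : IsPreconnected (P ∪ R ∪ N) := by
    have h1 : IsPreconnected (P ∪ R) := by
      refine IsPreconnected.union (⟨r + 1, 1⟩ : ℂ) ?_ ?_
        (convex_halfSpace_im_gt 0).isPreconnected (convex_halfSpace_re_gt r).isPreconnected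
      · simp [hP_def, Complex.im]
      · simp [hR_def, Complex.re]
    refine IsPreconnected.union (⟨r + 1, -1⟩ : ℂ) ?_ ?_ h1
      (convex_halfSpace_im_lt 0).isPreconnected
    · right
      simp [hR_def, Complex.re]
    · simp [hN_def, Complex.im]
  have hIT : Complex.I ∈ P ∪ R ∪ N := by
    left; left
    simp [hP_def]
  apply isPreconnected_of_forall Complex.I
  intro y hy
  rcases lt_trichotomy y.im 0 with him | him | him
  · exact ⟨P ∪ R ∪ N, hsub, hIT, Or.inr him, hT⟩
  · -- y is real, not in J
    have hyre : ((y.re : ℝ) : ℂ) = y := Complex.ext (by simp) (by simp [him])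
    have hyJ : y.re ∉ J := fun h => hy ⟨y.re, h, hyre⟩
    obtain ⟨δ, hδ, hball⟩ := Metric.isOpen_iff.mp (hJ.isClosed.isOpen_compl) y.re hyJ
    have hballsub : Metric.ball y δ ⊆ (Complex.ofReal '' J)ᶜ := by
      rintro z hz ⟨x, hxJ, rfl⟩
      apply hball _ hxJ
      rw [Metric.mem_ball, Real.dist_eq]
      calc |x - y.re| = |((x : ℂ) - y).re| := by simp
        _ ≤ ‖(x : ℂ) - y‖ := Complex.abs_re_le_norm _
        _ < δ := by rwa [Metric.mem_ball, Complex.dist_eq] at hz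
    refine ⟨Metric.ball y δ ∪ (P ∪ R ∪ N), Set.union_subset hballsub hsub,
      Or.inr hIT, Or.inl (Metric.mem_ball_self hδ), ?_⟩
    apply IsPreconnected.union (y + (δ / 2) * Complex.I) _ _
      (convex_ball y δ).isPreconnected hT
    · rw [Metric.mem_ball, Complex.dist_eq]
      simp only [add_sub_cancel_left]
      rw [norm_mul, Complex.norm_I, mul_one,
        show ((δ : ℂ) / 2) = ((δ / 2 : ℝ) : ℂ) by push_cast; ring,
        Complex.norm_real, Real.norm_eq_abs, abs_of_pos (by linarith)]
      linarith
    · left; left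
      simp [hP_def, him, hδ]
  · exact ⟨P ∪ R ∪ N, hsub, hIT, Or.inl (Or.inl him), hT⟩

/-- Main analytic lemma: if the Cauchy transform of `g` (supported on a compact `J ⊆ ℝ`)
vanishes on a nonempty open real interval disjoint from `J`, then all the "inverse-power
moments" of `g` vanish at a point `c` to the right of `J`. -/
lemma cauchy_key (J : Set ℝ) (hJc : IsCompact J)
    (g : ℝ → ℂ) (hg : Measurable g) (hgInt : IntegrableOn g J volume)
    {x₀ δ : ℝ} (hδ : 0 < δ) (hIJ : ∀ x ∈ Set.Ioo (x₀ - δ) (x₀ + δ), x ∉ J)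
    (hvan : ∀ᵐ x : ℝ, x ∈ Set.Ioo (x₀ - δ) (x₀ + δ) →
      (∫ y in J, g y / ((x : ℂ) - (y : ℝ))) = 0)
    {c : ℝ} (hc : ∀ y ∈ J, y + 1 ≤ c) :
    ∀ n : ℕ, (∫ y in J, g y / ((c : ℂ) - (y : ℝ)) ^ (n + 1)) = 0 := by
  by_cases hJe : J = ∅
  · intro n; simp [hJe]
  have hJne : J.Nonempty := Set.nonempty_iff_ne_empty.mpr hJe
  have hJmeas : MeasurableSet J := hJc.measurableSet
  set Jc : Set ℂ := Complex.ofReal '' J with hJc_def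
  have hJcne : Jc.Nonempty := hJne.image _
  have hJcclosed : IsClosed Jc := (hJc.image Complex.continuous_ofReal).isClosed
  have hU : IsOpen Jcᶜ := hJcclosed.isOpen_compl
  have hdpos : ∀ z ∈ Jcᶜ, 0 < Metric.infDist z Jc := by
    intro z hz
    exact (hJcclosed.notMem_iff_infDist_pos hJcne).mp hz
  have hdle : ∀ (z : ℂ), ∀ y ∈ J, Metric.infDist z Jc ≤ ‖z - (y : ℝ)‖ := by
    intro z y hy
    rw [← dist_eq_norm]
    exact Metric.infDist_le_dist_of_mem ⟨y, hy, rfl⟩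
  set Fn : ℕ → ℂ → ℂ := fun m z => ∫ y in J, g y / (z - (y : ℝ)) ^ (m + 1) with hFn_def
  have hmeas : ∀ (m : ℕ) (w : ℂ),
      AEStronglyMeasurable (fun y : ℝ => g y / (w - (y : ℝ)) ^ (m + 1)) (volume.restrict J) :=
    fun m w => (hg.div
      ((measurable_const.sub Complex.measurable_ofReal).pow_const _)).aestronglyMeasurable
  have hbd : ∀ (w z : ℂ), z ∈ Jcᶜ → w ∈ Metric.ball z (Metric.infDist z Jc / 2) →
      ∀ y ∈ J, Metric.infDist z Jc / 2 ≤ ‖w - (y : ℝ)‖ := by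
    intro w z hz hw y hy
    have h1 := hdle z y hy
    have h2 : dist z w < Metric.infDist z Jc / 2 := by rwa [dist_comm, ← Metric.mem_ball]
    have h3 : ‖z - (y : ℝ)‖ ≤ ‖z - w‖ + ‖w - (y : ℝ)‖ := by
      calc ‖z - (y : ℝ)‖ = ‖(z - w) + (w - (y : ℝ))‖ := by ring_nf
        _ ≤ _ := norm_add_le _ _
    rw [dist_eq_norm] at h2
    linarith
  have hintb : ∀ (m : ℕ) (w : ℂ) (d : ℝ), 0 < d → (∀ y ∈ J, d ≤ ‖w - (y : ℝ)‖) →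
      IntegrableOn (fun y : ℝ => g y / (w - (y : ℝ)) ^ (m + 1)) J volume := by
    intro m w d hd hdy
    apply Integrable.mono' (hgInt.norm.const_mul ((1 / d) ^ (m + 1))) (hmeas m w)
    filter_upwards [ae_restrict_mem hJmeas] with y hy
    have h2 : d ^ (m + 1) ≤ ‖w - (y : ℝ)‖ ^ (m + 1) := pow_le_pow_left₀ hd.le (hdy y hy) _
    rw [norm_div, norm_pow]
    calc ‖g y‖ / ‖w - (y : ℝ)‖ ^ (m + 1) ≤ ‖g y‖ / d ^ (m + 1) := by
          apply div_le_div_of_nonneg_left (norm_nonneg _) (pow_pos hd _) h2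
      _ = (1 / d) ^ (m + 1) * ‖g y‖ := by rw [one_div, inv_pow]; ring
  have hderiv : ∀ (m : ℕ) (z : ℂ), z ∈ Jcᶜ →
      HasDerivAt (Fn m) (-((m : ℂ) + 1) * Fn (m + 1) z) z := by
    intro m z hz
    set d := Metric.infDist z Jc with hd_def
    have hd : 0 < d := hdpos z hz
    set C : ℝ := ‖-((m : ℂ) + 1)‖ with hC_def
    have key := hasDerivAt_integral_of_dominated_loc_of_deriv_le
      (μ := volume.restrict J) (x₀ := z) (s := Metric.ball z (d / 2))
      (F := fun w (y : ℝ) => g y / (w - (y : ℝ)) ^ (m + 1))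
      (F' := fun w (y : ℝ) => g y * (-((m : ℂ) + 1) / (w - (y : ℝ)) ^ (m + 2)))
      (bound := fun y => ‖g y‖ * (C / (d / 2) ^ (m + 2)))
      (Metric.ball_mem_nhds z (half_pos hd))
      (Filter.Eventually.of_forall fun w => hmeas m w)
      (hintb m z d hd (hdle z))
      ((hg.mul (measurable_const.div
        ((measurable_const.sub Complex.measurable_ofReal).pow_const _))).aestronglyMeasurable)
      ?_ ((hgInt.norm.mul_const _)) ?_
    · have heq : (∫ y in J, g y * (-((m : ℂ) + 1) / (z - (y : ℝ)) ^ (m + 2)))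
          = -((m : ℂ) + 1) * Fn (m + 1) z := by
        rw [hFn_def]
        simp only
        rw [← MeasureTheory.integral_const_mul]
        apply setIntegral_congr_fun hJmeas
        intro y hy
        show g y * (-((m : ℂ) + 1) / (z - (y : ℝ)) ^ (m + 2))
          = -((m : ℂ) + 1) * (g y / (z - (y : ℝ)) ^ (m + 1 + 1))
        ring_nf
      rw [← heq]
      exact key.2
    · -- bound
      filter_upwards [ae_restrict_mem hJmeas] with y hy w hw
      have hwy : d / 2 ≤ ‖w - (y : ℝ)‖ := hbd w z hz hw y hy
      rw [norm_mul, norm_div, norm_pow]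
      gcongr
    · -- differentiability
      filter_upwards [ae_restrict_mem hJmeas] with y hy w hw
      have hwy : d / 2 ≤ ‖w - (y : ℝ)‖ := hbd w z hz hw y hy
      have hne : (w - (y : ℝ)) ≠ 0 := by
        intro h
        rw [h, norm_zero] at hwy
        linarith
      have h1 : HasDerivAt (fun w : ℂ => w - (y : ℝ)) 1 w := (hasDerivAt_id w).sub_const _
      have h2 := h1.pow (m + 1)
      have h3 := (h2.inv (pow_ne_zero _ hne)).const_mul (g y)
      simp_rw [div_eq_mul_inv]
      refine h3.congr_deriv ?_
      simp only [Pi.pow_apply, Nat.add_sub_cancel, Nat.cast_add, Nat.cast_one]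
      rw [div_eq_mul_inv]
      field_simp
      ring
  have hanal : AnalyticOnNhd ℂ (Fn 0) Jcᶜ := by
    apply DifferentiableOn.analyticOnNhd _ hU
    intro z hz
    exact ((hderiv 0 z hz).differentiableAt).differentiableWithinAt
  have hx₀U : ((x₀ : ℝ) : ℂ) ∈ Jcᶜ := by
    rintro ⟨y, hyJ, hEq⟩
    have : y = x₀ := by exact_mod_cast hEq
    subst this
    exact hIJ y ⟨by linarith, by linarith⟩ hyJ
  have hfreq : ∃ᶠ z in nhdsWithin ((x₀ : ℝ) : ℂ) {((x₀ : ℝ) : ℂ)}ᶜ, Fn 0 z = 0 := by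
    rw [Filter.frequently_iff]
    intro s hs
    rw [Metric.mem_nhdsWithin_iff] at hs
    obtain ⟨ε, hε, hsub⟩ := hs
    set m := min ε δ with hm_def
    have hm : 0 < m := lt_min hε hδ
    have hrne : volume.restrict (Set.Ioo x₀ (x₀ + m)) ≠ 0 := by
      rw [Ne, Measure.restrict_eq_zero, Real.volume_Ioo]
      simp only [ENNReal.ofReal_eq_zero, not_le]
      linarith
    haveI : (ae (volume.restrict (Set.Ioo x₀ (x₀ + m)))).NeBot := ae_neBot.mpr hrne
    have key : ∀ᵐ x ∂(volume.restrict (Set.Ioo x₀ (x₀ + m))),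
        x ∈ Set.Ioo x₀ (x₀ + m) ∧ (x ∈ Set.Ioo (x₀ - δ) (x₀ + δ) →
          (∫ y in J, g y / ((x : ℂ) - (y : ℝ))) = 0) :=
      (ae_restrict_mem measurableSet_Ioo).and (ae_restrict_of_ae hvan)
    obtain ⟨x, hx1, hx2⟩ := key.exists
    have hmδ : m ≤ δ := min_le_right _ _
    have hmε : m ≤ ε := min_le_left _ _
    have hxδ : x ∈ Set.Ioo (x₀ - δ) (x₀ + δ) :=
      ⟨by linarith [hx1.1], by linarith [hx1.2]⟩
    refine ⟨((x : ℝ) : ℂ), hsub ⟨?_, ?_⟩, ?_⟩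
    · rw [Metric.mem_ball, Complex.dist_eq, ← Complex.ofReal_sub, Complex.norm_real, Real.norm_eq_abs,
        abs_of_pos (by linarith [hx1.1])]
      linarith [hx1.1, hx1.2]
    · simp only [Set.mem_compl_iff, Set.mem_singleton_iff]
      intro h
      have : x = x₀ := by exact_mod_cast h
      linarith [hx1.1]
    · show (∫ y in J, g y / (((x : ℝ) : ℂ) - (y : ℝ)) ^ (0 + 1)) = 0
      simp only [zero_add, pow_one]
      exact hx2 hxδ
  have hzero : Set.EqOn (Fn 0) 0 Jcᶜ :=
    hanal.eqOn_zero_of_preconnected_of_frequently_eq_zero (preconnected_compl_real hJc)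
      hx₀U hfreq
  have hcU : ((c : ℝ) : ℂ) ∈ Jcᶜ := by
    rintro ⟨y, hyJ, hEq⟩
    have : y = c := by exact_mod_cast hEq
    have := hc y hyJ
    linarith
  have hall : ∀ n : ℕ, ∀ z ∈ Jcᶜ, Fn n z = 0 := by
    intro n
    induction n with
    | zero => exact fun z hz => hzero hz
    | succ n ih =>
      intro z hz
      have h1 := hderiv n z hz
      have h2 : (fun _ : ℂ => (0 : ℂ)) =ᶠ[nhds z] Fn n := by
        filter_upwards [hU.mem_nhds hz] with w hw using (ih w hw).symm
      have h3 := h1.congr_of_eventuallyEq h2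
      have h4 := h3.unique (hasDerivAt_const z 0)
      have h5 : -((n : ℂ) + 1) ≠ 0 := by
        intro h
        rw [neg_eq_zero] at h
        exact Nat.cast_add_one_ne_zero n h
      rcases mul_eq_zero.mp h4 with h | h
      · exact absurd h h5
      · exact h
  intro n
  exact hall n ((c : ℝ) : ℂ) hcU

/-- Moment vanishing implies vanishing a.e. -/
lemma moments_zero (J : Set ℝ) (hJc : IsCompact J)
    (g : ℝ → ℂ) (hg : Measurable g) (hgInt : IntegrableOn g J volume)
    {c : ℝ} (hc : ∀ y ∈ J, y + 1 ≤ c)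
    (hmom : ∀ n : ℕ, (∫ y in J, g y / ((c : ℂ) - (y : ℝ)) ^ (n + 1)) = 0) :
    ∀ᵐ y : ℝ, y ∈ J → g y = 0 := by
  have hJmeas : MeasurableSet J := hJc.measurableSet
  have hcy : ∀ y ∈ J, (1 : ℝ) ≤ c - y := fun y hy => by linarith [hc y hy]
  have hcyC : ∀ y ∈ J, (1 : ℝ) ≤ ‖(c : ℂ) - (y : ℝ)‖ := by
    intro y hy
    rw [← Complex.ofReal_sub, Complex.norm_real, Real.norm_eq_abs,
      abs_of_pos (by linarith [hcy y hy])]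
    exact hcy y hy
  have hne0 : ∀ y ∈ J, ((c : ℂ) - (y : ℝ)) ≠ 0 := by
    intro y hy h0
    have := hcyC y hy
    rw [h0, norm_zero] at this
    linarith
  set h : ℝ → ℂ := fun y => g y / ((c : ℂ) - (y : ℝ)) with hh_def
  have hhmeas : Measurable h :=
    hg.div (measurable_const.sub Complex.measurable_ofReal)
  have hhInt : IntegrableOn h J volume := by
    apply Integrable.mono' hgInt.norm hhmeas.aestronglyMeasurable
    filter_upwards [ae_restrict_mem hJmeas] with y hy
    rw [norm_div]
    exact div_le_self (norm_nonneg _) (hcyC y hy)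
  -- moments of h against powers of u(y) = (c - y)⁻¹
  have hmom' : ∀ n : ℕ, (∫ y in J, h y * ((((c - y)⁻¹ : ℝ)) : ℂ) ^ n) = 0 := by
    intro n
    rw [← hmom n]
    apply setIntegral_congr_fun hJmeas
    intro y hy
    have h0 := hne0 y hy
    show h y * ((((c - y)⁻¹ : ℝ)) : ℂ) ^ n = g y / ((c : ℂ) - (y : ℝ)) ^ (n + 1)
    rw [hh_def]
    push_cast
    rw [inv_pow]
    rw [div_eq_mul_inv, div_eq_mul_inv, mul_assoc, ← mul_inv, ← pow_succ']
  -- integrability of h times bounded measurable multipliers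
  have hbddint : ∀ e : ℝ → ℝ, Measurable e → ∀ C : ℝ, (∀ x ∈ J, |e x| ≤ C) →
      IntegrableOn (fun x => e x • h x) J volume := by
    intro e he C hC
    apply Integrable.mono' (hhInt.norm.const_mul C) (he.smul hhmeas).aestronglyMeasurable
    filter_upwards [ae_restrict_mem hJmeas] with y hy
    rw [Pi.smul_apply', norm_smul, Real.norm_eq_abs]
    exact mul_le_mul_of_nonneg_right (hC y hy) (norm_nonneg _)
  -- integral of h against polynomials in (c - y)⁻¹ vanishes
  have hpoly : ∀ p : Polynomial ℝ,
      (∫ y in J, h y * ((p.eval ((c - y)⁻¹) : ℝ) : ℂ)) = 0 := by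
    intro p
    have hre : ∀ y ∈ J, h y * ((p.eval ((c - y)⁻¹) : ℝ) : ℂ)
        = ∑ i ∈ Finset.range (p.natDegree + 1),
            (p.coeff i : ℂ) * (h y * ((((c - y)⁻¹ : ℝ)) : ℂ) ^ i) := by
      intro y hy
      rw [Polynomial.eval_eq_sum_range]
      push_cast
      rw [Finset.mul_sum]
      apply Finset.sum_congr rfl
      intro i _
      ring
    rw [setIntegral_congr_fun hJmeas hre, integral_finset_sum]
    · apply Finset.sum_eq_zero
      intro i _
      rw [MeasureTheory.integral_const_mul, hmom' i, mul_zero]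
    · intro i _
      apply Integrable.const_mul
      have := hbddint (fun y => ((c - y)⁻¹) ^ i)
        ((measurable_const.sub measurable_id).inv.pow_const i) 1 ?_
      · apply this.congr_fun _ hJmeas
        intro y hy
        show ((c - y)⁻¹ ^ i : ℝ) • h y = h y * ((((c - y)⁻¹ : ℝ)) : ℂ) ^ i
        rw [Complex.real_smul]
        push_cast
        ring
      · intro x hx
        rw [abs_pow]
        apply pow_le_one₀ (abs_nonneg _)
        rw [abs_inv]
        rw [abs_of_pos (by linarith [hcy x hx])]
        rw [inv_le_one_iff₀]
        right
        exact hcy x hx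
  -- Stone-Weierstrass: conclude the indicator of h vanishes a.e.
  have hind : ∀ᵐ x : ℝ, (J.indicator h) x = 0 := by
    apply ae_eq_zero_of_integral_contDiff_smul_eq_zero
      ((hhInt.integrable_indicator hJmeas).locallyIntegrable)
    intro ψ hψ hψc
    have hsmul_ind : (fun x => ψ x • J.indicator h x) = J.indicator (fun x => ψ x • h x) := by
      funext x
      by_cases hx : x ∈ J
      · simp [Set.indicator_of_mem hx]
      · simp [Set.indicator_of_notMem hx]
    rw [hsmul_ind, integral_indicator hJmeas]
    haveI : CompactSpace J := isCompact_iff_compactSpace.mp hJc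
    set T := ∫ x in J, ψ x • h x with hT_def
    have hψcont : Continuous ψ := hψ.continuous
    have hnormle : ∀ ε : ℝ, 0 < ε → ‖T‖ ≤ ε := by
      intro ε hε
      set CI := ∫ y in J, ‖h y‖ with hCI_def
      have hCI0 : 0 ≤ CI := integral_nonneg fun _ => norm_nonneg _
      set ε' := ε / (CI + 1) with hε'_def
      have hε'pos : 0 < ε' := div_pos hε (by linarith)
      -- the generator
      set u₀ : C(J, ℝ) := ⟨fun y => (c - (y : ℝ))⁻¹,
        (continuous_const.sub continuous_subtype_val).inv₀
          (fun y => by have := hcy (y : ℝ) y.2; intro hq; rw [show c - (y : ℝ) = 0 from hq] at this; linarith)⟩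
        with hu₀_def
      set SWA : Subalgebra ℝ C(J, ℝ) := Algebra.adjoin ℝ ({u₀} : Set C(J, ℝ)) with hSWA_def
      have hsep : SWA.SeparatesPoints := by
        intro x y hxy
        refine ⟨u₀, ⟨u₀, Algebra.subset_adjoin (Set.mem_singleton _), rfl⟩, ?_⟩
        intro hEq
        apply hxy
        have : (c - (x : ℝ))⁻¹ = (c - (y : ℝ))⁻¹ := hEq
        have h2 := inv_inj.mp this
        exact Subtype.ext (by linarith)
      set ψJ : C(J, ℝ) := ⟨fun y => ψ (y : ℝ), hψcont.comp continuous_subtype_val⟩ with hψJ_def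
      obtain ⟨q, hq⟩ := ContinuousMap.exists_mem_subalgebra_near_continuousMap_of_separatesPoints
        SWA hsep ψJ ε' hε'pos
      have hq2 : (q : C(J, ℝ)) ∈ (Polynomial.aeval (R := ℝ) u₀).range := by
        rw [← Algebra.adjoin_singleton_eq_range_aeval ℝ u₀]
        exact hSWA_def ▸ q.2
      obtain ⟨p, hp⟩ := hq2
      have hqe : ∀ y : J, (q : C(J, ℝ)) y = p.eval ((c - (y : ℝ))⁻¹) := by
        intro y
        rw [← hp]
        exact Polynomial.aeval_continuousMap_apply p u₀ y
      have happrox : ∀ y ∈ J, |ψ y - p.eval ((c - y)⁻¹)| ≤ ε' := by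
        intro y hy
        have h1 := ContinuousMap.norm_coe_le_norm ((q : C(J, ℝ)) - ψJ) ⟨y, hy⟩
        rw [ContinuousMap.sub_apply] at h1
        have h2 : (q : C(J, ℝ)) ⟨y, hy⟩ - ψJ ⟨y, hy⟩ = -(ψ y - p.eval ((c - y)⁻¹)) := by
          rw [hqe ⟨y, hy⟩]
          simp [hψJ_def]
        rw [h2, Real.norm_eq_abs, abs_neg] at h1
        exact h1.trans hq.le
      -- measurability and bound for the polynomial multiplier
      have hemeas : Measurable fun x : ℝ => p.eval ((c - x)⁻¹) :=
        (Polynomial.continuous p).measurable.comp (measurable_const.sub measurable_id).inv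
      obtain ⟨Ce, hCe⟩ := hJc.exists_bound_of_continuousOn
        (((Polynomial.continuous p).comp_continuousOn
          ((continuous_const.sub continuous_id).continuousOn.inv₀
            (fun x hx => by
              show c - x ≠ 0
              have := hcy x hx
              intro hq0
              linarith))))
      have hint2 : IntegrableOn (fun x => (p.eval ((c - x)⁻¹)) • h x) J volume :=
        hbddint _ hemeas Ce (fun x hx => by simpa using hCe x hx)
      obtain ⟨Cψ, hCψ⟩ := hJc.exists_bound_of_continuousOn hψcont.continuousOn
      have hint1 : IntegrableOn (fun x => ψ x • h x) J volume :=
        hbddint _ hψcont.measurable Cψ (fun x hx => by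
          have := hCψ x hx; rwa [Real.norm_eq_abs] at this)
      have hzero2 : (∫ x in J, (p.eval ((c - x)⁻¹)) • h x) = 0 := by
        rw [← hpoly p]
        apply setIntegral_congr_fun hJmeas
        intro y hy
        show (p.eval ((c - y)⁻¹)) • h y = h y * ((p.eval ((c - y)⁻¹) : ℝ) : ℂ)
        rw [Complex.real_smul]
        ring
      have hfun : (fun x => (ψ x - p.eval ((c - x)⁻¹)) • h x)
          = fun x => ψ x • h x - (p.eval ((c - x)⁻¹)) • h x :=
        funext fun x => by rw [sub_smul]
      have hint3 : IntegrableOn (fun x => (ψ x - p.eval ((c - x)⁻¹)) • h x) J volume := by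
        rw [hfun]; exact hint1.sub hint2
      have hsplit : T = ∫ x in J, (ψ x - p.eval ((c - x)⁻¹)) • h x := by
        rw [hT_def, ← sub_zero (∫ x in J, ψ x • h x), ← hzero2, hfun,
          integral_sub hint1 hint2]
      rw [hsplit]
      calc ‖∫ x in J, (ψ x - p.eval ((c - x)⁻¹)) • h x‖
          ≤ ∫ x in J, ‖(ψ x - p.eval ((c - x)⁻¹)) • h x‖ := norm_integral_le_integral_norm _
        _ ≤ ∫ x in J, ε' * ‖h x‖ := by
            apply setIntegral_mono_on hint3.norm (hhInt.norm.const_mul ε') hJmeas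
            intro x hx
            show ‖(ψ x - p.eval ((c - x)⁻¹)) • h x‖ ≤ ε' * ‖h x‖
            rw [norm_smul, Real.norm_eq_abs]
            exact mul_le_mul_of_nonneg_right (happrox x hx) (norm_nonneg _)
        _ = ε' * CI := by rw [MeasureTheory.integral_const_mul]
        _ ≤ ε := by
            rw [hε'_def, div_mul_eq_mul_div, div_le_iff₀ (by linarith)]
            nlinarith
    have hT0 : ‖T‖ ≤ 0 := by
      by_contra h'
      push_neg at h'
      have := hnormle (‖T‖ / 2) (by linarith)
      linarith
    exact norm_le_zero_iff.mp hT0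
  filter_upwards [hind] with y hy hyJ
  rw [Set.indicator_of_mem hyJ] at hy
  rcases div_eq_zero_iff.mp hy with h0 | h0
  · exact h0
  · exact absurd h0 (hne0 y hyJ)

theorem main_lemma (J E : Set ℝ) (hJ : IsMultiInterval J) (hE : IsMultiInterval E)
    (hdisj : interior J ∩ interior E = ∅)
    (hEint : (interior E).Nonempty)
    (g : ℝ → ℂ) (hg : Measurable g) (hgL2 : MemLp (J.indicator g) 2 volume)
    (hAg : ∀ᵐ x : ℝ, x ∈ E → (∫ y in J, g y / ((x : ℂ) - (y : ℝ))) = 0) :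
    ∀ᵐ y : ℝ, y ∈ J → g y = 0 := by
  have hJcomp : IsCompact J := hJ.isCompact
  have hJmeas : MeasurableSet J := hJcomp.measurableSet
  -- integrability of g on J
  have hgInt : IntegrableOn g J volume := by
    haveI : IsFiniteMeasure (volume.restrict J) :=
      ⟨by rw [Measure.restrict_apply_univ]; exact hJcomp.measure_lt_top⟩
    have h2 : MemLp g 2 (volume.restrict J) := by
      have := hgL2.restrict (μ := volume) J
      refine this.ae_eq ?_
      filter_upwards [ae_restrict_mem hJmeas] with y hy
      simp [Set.indicator_of_mem hy]
    exact memLp_one_iff_integrable.mp (h2.mono_exponent (by norm_num))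
  -- find an interval inside (interior E) \ J
  obtain ⟨F, hF, hJF⟩ := hJ.subset_interior_union_finite
  have hEopen : IsOpen (interior E \ J) := isOpen_interior.sdiff hJcomp.isClosed
  have hne : (interior E \ J).Nonempty := by
    obtain ⟨x, hx⟩ := hEint
    obtain ⟨ε, hε, hball⟩ := Metric.isOpen_iff.mp isOpen_interior x hx
    rw [Real.ball_eq_Ioo] at hball
    have hinf : (Set.Ioo (x - ε) (x + ε) \ F).Infinite :=
      Set.Infinite.diff (Set.Ioo_infinite (by linarith)) hF
    obtain ⟨z, hz⟩ := hinf.nonempty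
    refine ⟨z, hball hz.1, fun hzJ => ?_⟩
    rcases hJF hzJ with h | h
    · exact Set.eq_empty_iff_forall_notMem.mp hdisj z ⟨h, hball hz.1⟩
    · exact hz.2 h
  obtain ⟨x₀, hx₀⟩ := hne
  obtain ⟨δ, hδ, hball⟩ := Metric.isOpen_iff.mp hEopen x₀ hx₀
  rw [Real.ball_eq_Ioo] at hball
  -- choose c to the right of J
  obtain ⟨r, hr⟩ := hJcomp.isBounded.subset_closedBall 0
  have hc : ∀ y ∈ J, y + 1 ≤ r + 1 := by
    intro y hy
    have := hr hy
    rw [Metric.mem_closedBall, Real.dist_eq, sub_zero] at this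
    have := abs_le.mp this
    linarith [this.2]
  refine moments_zero J hJcomp g hg hgInt hc ?_
  refine cauchy_key J hJcomp g hg hgInt hδ (fun x hx => (hball hx).2) ?_ hc
  filter_upwards [hAg] with x hx hxI
  exact hx (interior_subset (hball hxI).1)

/-- Let `J, E` be multi-intervals with disjoint interiors (and nonempty
interiors).  If `g ∈ L²(J)` satisfies `(Ag)(x) = (1/π)∫_J g(y)/(x-y) dy = 0` a.e. on `E`,
then `g = 0` a.e. on `J`.  Consequently, `0` is not an eigenvalue of the block operator
`𝒦 = [[0, A], [A†, 0]]` on `L²(E) ⊕ L²(J)`: if moreover `(A†f)(w) = (1/π)∫_E f(x)/(x-w) dx = 0`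
a.e. on `J` for `f ∈ L²(E)`, then also `f = 0` a.e. on `E`. -/
theorem stmt5 (J E : Set ℝ) (hJ : IsMultiInterval J) (hE : IsMultiInterval E)
    (hdisj : interior J ∩ interior E = ∅)
    (hJint : (interior J).Nonempty) (hEint : (interior E).Nonempty)
    (g f : ℝ → ℂ) (hg : Measurable g) (hgL2 : MemLp (J.indicator g) 2 volume)
    (hf : Measurable f) (hfL2 : MemLp (E.indicator f) 2 volume)
    (hAg : ∀ᵐ x : ℝ, x ∈ E → (1 / (Real.pi : ℂ)) * ∫ y in J, g y / ((x - y : ℝ) : ℂ) = 0) :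
    (∀ᵐ y : ℝ, y ∈ J → g y = 0) ∧
    ((∀ᵐ w : ℝ, w ∈ J → (1 / (Real.pi : ℂ)) * ∫ x in E, f x / ((x - w : ℝ) : ℂ) = 0) →
      (∀ᵐ x : ℝ, x ∈ E → f x = 0)) := by
  have hpi : (1 / (Real.pi : ℂ)) ≠ 0 := by
    simp [Real.pi_ne_zero]
  constructor
  · apply main_lemma J E hJ hE hdisj hEint g hg hgL2
    filter_upwards [hAg] with x hx hxE
    have h := hx hxE
    rw [mul_eq_zero] at h
    rcases h with h | h
    · exact absurd h hpi
    · rw [← h]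
      apply setIntegral_congr_fun hJ.isCompact.measurableSet
      intro y hy
      push_cast
      ring_nf
  · intro hAf
    apply main_lemma E J hE hJ (by rw [Set.inter_comm] at hdisj; exact hdisj) hJint f hf hfL2
    filter_upwards [hAf] with w hw hwJ
    have h := hw hwJ
    rw [mul_eq_zero] at h
    rcases h with h | h
    · exact absurd h hpi
    · have : (∫ x in E, f x / ((x - w : ℝ) : ℂ)) = - ∫ x in E, f x / ((w : ℂ) - (x : ℝ)) := by
        rw [← integral_neg]
        apply setIntegral_congr_fun hE.isCompact.measurableSet
        intro x hx
        push_cast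
        rw [div_eq_mul_inv, div_eq_mul_inv]
        rw [show ((w:ℂ) - x) = -((x:ℂ) - w) by ring, inv_neg]
        ring
      rw [this, neg_eq_zero] at h
      exact h
end

section
/- Let ρ ∈ ℂ with |Re ρ| < 1/2 and λ = −1/sin(πρ). Define P(z) = z^{ρσ₃}C₊(ρ) for Im z > 0 and P(z) = z^{ρσ₃}C₋(ρ) for Im z < 0, where σ₃ = diag(1,−1), z^{ρσ₃} = diag(z^ρ, z^{−ρ}) with the principal branch on ℂ ∖ (−∞,0], C₊(ρ) = [[1, −e^{−iπρ}],[1, e^{iπρ}]], and C₋(ρ) = [[1, −e^{iπρ}],[1, e^{−iπρ}]]. Then P satisfies the jump relations P₊(x) = P₋(x)·[[1, −2i/λ],[0,1]] for x > 0 and P₊(x) = P₋(x)·[[1,0],[2i/λ,1]] for x < 0, where P₊ and P₋ denote boundary values from the upper and lower half-planes. -/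
open Complex Matrix Filter Topology

/-- `C₊(ρ)`. -/
noncomputable def Cplus (ρ : ℂ) : Matrix (Fin 2) (Fin 2) ℂ :=
  !![(1 : ℂ), -Complex.exp (-(Real.pi * I * ρ)); 1, Complex.exp (Real.pi * I * ρ)]

/-- `C₋(ρ)`. -/
noncomputable def Cminus (ρ : ℂ) : Matrix (Fin 2) (Fin 2) ℂ :=
  !![(1 : ℂ), -Complex.exp (Real.pi * I * ρ); 1, Complex.exp (-(Real.pi * I * ρ))]

/-- The parametrix `P(z) = z^{ρσ₃} C₊(ρ)` for `Im z > 0` and `z^{ρσ₃} C₋(ρ)` for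
`Im z < 0`, where `z^{ρσ₃} = diag(z^ρ, z^{-ρ})` (principal branch). -/
noncomputable def Pmat (ρ : ℂ) (z : ℂ) : Matrix (Fin 2) (Fin 2) ℂ :=
  !![z ^ ρ, 0; 0, z ^ (-ρ)] * (if 0 < z.im then Cplus ρ else Cminus ρ)

section Aux

set_option maxHeartbeats 1000000

lemma key13 {l : Filter ℝ} {f g : ℝ → ℂ} {A B : ℂ} (C : Matrix (Fin 2) (Fin 2) ℂ)
    (hf : Tendsto f l (𝓝 A)) (hg : Tendsto g l (𝓝 B)) :
    Tendsto (fun t => !![f t, 0; 0, g t] * C) l (𝓝 (!![A, 0; 0, B] * C)) := by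
  refine tendsto_pi_nhds.2 fun i => tendsto_pi_nhds.2 fun j => ?_
  fin_cases i <;> fin_cases j <;>
    simp [Matrix.mul_apply, Fin.sum_univ_two] <;>
    first
      | exact hf.mul tendsto_const_nhds
      | exact hg.mul tendsto_const_nhds

-- limits for x > 0
lemma tpos13 (x : ℝ) (hx : 0 < x) (w : ℂ) :
    Tendsto (fun ε : ℝ => ((x : ℂ) + ε * I) ^ w) (𝓝[>] 0) (𝓝 ((x : ℂ) ^ w)) := by
  have hca : ContinuousAt (fun z : ℂ => z ^ w) x :=
    continuousAt_cpow_const (by simp [Complex.mem_slitPlane_iff, hx])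
  have h1 : Tendsto (fun ε : ℝ => (x : ℂ) + ε * I) (𝓝[>] 0) (𝓝 (x : ℂ)) := by
    have : Continuous fun ε : ℝ => (x : ℂ) + ε * I := by continuity
    simpa using (this.tendsto 0).mono_left nhdsWithin_le_nhds
  exact hca.tendsto.comp h1

lemma tpos13' (x : ℝ) (hx : 0 < x) (w : ℂ) :
    Tendsto (fun ε : ℝ => ((x : ℂ) - ε * I) ^ w) (𝓝[>] 0) (𝓝 ((x : ℂ) ^ w)) := by
  have hca : ContinuousAt (fun z : ℂ => z ^ w) x :=
    continuousAt_cpow_const (by simp [Complex.mem_slitPlane_iff, hx])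
  have h1 : Tendsto (fun ε : ℝ => (x : ℂ) - ε * I) (𝓝[>] 0) (𝓝 (x : ℂ)) := by
    have : Continuous fun ε : ℝ => (x : ℂ) - ε * I := by continuity
    simpa using (this.tendsto 0).mono_left nhdsWithin_le_nhds
  exact hca.tendsto.comp h1

-- limits for x < 0, from above
lemma tneg13 (x : ℝ) (hx : x < 0) (w : ℂ) :
    Tendsto (fun ε : ℝ => ((x : ℂ) + ε * I) ^ w) (𝓝[>] 0)
      (𝓝 (Complex.exp ((Real.log |x| + Real.pi * I) * w))) := by
  have h1 : Tendsto (fun ε : ℝ => (x : ℂ) + ε * I) (𝓝[>] 0)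
      (𝓝[{z : ℂ | 0 ≤ z.im}] (x : ℂ)) := by
    rw [tendsto_nhdsWithin_iff]
    constructor
    · have : Continuous fun ε : ℝ => (x : ℂ) + ε * I := by continuity
      simpa using (this.tendsto 0).mono_left nhdsWithin_le_nhds
    · filter_upwards [self_mem_nhdsWithin] with ε hε
      simp [le_of_lt (Set.mem_Ioi.mp hε)]
  have hlog := (Complex.tendsto_log_nhdsWithin_im_nonneg_of_re_neg_of_im_zero
      (z := (x : ℂ)) (by simpa using hx) (by simp)).comp h1
  have h2 : Tendsto (fun ε : ℝ => Complex.exp (Complex.log ((x : ℂ) + ε * I) * w)) (𝓝[>] 0)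
      (𝓝 (Complex.exp ((Real.log |x| + Real.pi * I) * w))) := by
    have := (Complex.continuous_exp.tendsto _).comp (hlog.mul_const w)
    simpa [Function.comp_def] using this
  refine h2.congr' ?_
  filter_upwards [self_mem_nhdsWithin] with ε hε
  rw [Complex.cpow_def_of_ne_zero]
  intro h
  have him := congrArg Complex.im h
  simp only [Set.mem_Ioi] at hε
  simp at him
  linarith

-- limits for x < 0, from below
lemma tneg13' (x : ℝ) (hx : x < 0) (w : ℂ) :
    Tendsto (fun ε : ℝ => ((x : ℂ) - ε * I) ^ w) (𝓝[>] 0)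
      (𝓝 (Complex.exp ((Real.log |x| - Real.pi * I) * w))) := by
  have h1 : Tendsto (fun ε : ℝ => (x : ℂ) - ε * I) (𝓝[>] 0)
      (𝓝[{z : ℂ | z.im < 0}] (x : ℂ)) := by
    rw [tendsto_nhdsWithin_iff]
    constructor
    · have : Continuous fun ε : ℝ => (x : ℂ) - ε * I := by continuity
      simpa using (this.tendsto 0).mono_left nhdsWithin_le_nhds
    · filter_upwards [self_mem_nhdsWithin] with ε hε
      simp only [Set.mem_Ioi] at hε
      simp [hε]
  have hlog := (Complex.tendsto_log_nhdsWithin_im_neg_of_re_neg_of_im_zero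
      (z := (x : ℂ)) (by simpa using hx) (by simp)).comp h1
  have h2 : Tendsto (fun ε : ℝ => Complex.exp (Complex.log ((x : ℂ) - ε * I) * w)) (𝓝[>] 0)
      (𝓝 (Complex.exp ((Real.log |x| - Real.pi * I) * w))) := by
    have := (Complex.continuous_exp.tendsto _).comp (hlog.mul_const w)
    simpa [Function.comp_def] using this
  refine h2.congr' ?_
  filter_upwards [self_mem_nhdsWithin] with ε hε
  rw [Complex.cpow_def_of_ne_zero]
  intro h
  have him := congrArg Complex.im h
  simp only [Set.mem_Ioi] at hε
  simp at him
  linarith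

lemma algpos13 (ρ : ℂ) : Cplus ρ = Cminus ρ *
    !![(1 : ℂ), -(Complex.exp (-(Real.pi * I * ρ)) - Complex.exp (Real.pi * I * ρ)); 0, 1] := by
  ext i j
  fin_cases i <;> fin_cases j <;>
    simp [Cplus, Cminus, Matrix.mul_apply, Fin.sum_univ_two] <;> ring

lemma algneg13 (ρ : ℂ) (L : ℝ) :
    !![Complex.exp (((L : ℂ) + Real.pi * I) * ρ), 0; 0,
        Complex.exp (((L : ℂ) + Real.pi * I) * (-ρ))] * Cplus ρ =
    (!![Complex.exp (((L : ℂ) - Real.pi * I) * ρ), 0; 0,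
        Complex.exp (((L : ℂ) - Real.pi * I) * (-ρ))] * Cminus ρ) *
      !![(1 : ℂ), 0; Complex.exp (-(Real.pi * I * ρ)) - Complex.exp (Real.pi * I * ρ), 1] := by
  have e1 : Complex.exp (((L : ℂ) + Real.pi * I) * ρ)
      = Complex.exp ((L : ℂ) * ρ) * Complex.exp (Real.pi * I * ρ) := by
    rw [← Complex.exp_add]; ring_nf
  have e2 : Complex.exp (((L : ℂ) + Real.pi * I) * (-ρ))
      = Complex.exp ((L : ℂ) * (-ρ)) * Complex.exp (-(Real.pi * I * ρ)) := by
    rw [← Complex.exp_add]; ring_nf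
  have e3 : Complex.exp (((L : ℂ) - Real.pi * I) * ρ)
      = Complex.exp ((L : ℂ) * ρ) * Complex.exp (-(Real.pi * I * ρ)) := by
    rw [← Complex.exp_add]; ring_nf
  have e4 : Complex.exp (((L : ℂ) - Real.pi * I) * (-ρ))
      = Complex.exp ((L : ℂ) * (-ρ)) * Complex.exp (Real.pi * I * ρ) := by
    rw [← Complex.exp_add]; ring_nf
  have hb : Complex.exp (-(Real.pi * I * ρ)) = (Complex.exp (Real.pi * I * ρ))⁻¹ :=
    Complex.exp_neg _
  ext i j
  fin_cases i <;> fin_cases j <;>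
    simp [Cplus, Cminus, Matrix.mul_apply, Fin.sum_univ_two, e1, e2, e3, e4, hb]
  all_goals try field_simp
  any_goals ring
  all_goals rw [sq, ← Complex.exp_add, ← Complex.exp_add]
  all_goals ring_nf

end Aux

/-- For `|Re ρ| < 1/2` and `λ = -1/sin(πρ)`, the parametrix `P`
satisfies the jump relations `P₊(x) = P₋(x)·[[1, -2i/λ],[0,1]]` for `x > 0` and
`P₊(x) = P₋(x)·[[1, 0],[2i/λ, 1]]` for `x < 0`, where `P₊`, `P₋` are the boundary
values from the upper and lower half planes. -/
theorem stmt13 (ρ lam : ℂ) (hρ : |ρ.re| < 1 / 2)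
    (hsin : Complex.sin (Real.pi * ρ) ≠ 0)
    (hlam : lam = -(1 / Complex.sin (Real.pi * ρ))) :
    ∀ x : ℝ,
      (0 < x → ∃ Pp Pm : Matrix (Fin 2) (Fin 2) ℂ,
        Tendsto (fun ε : ℝ => Pmat ρ ((x : ℂ) + ε * I)) (𝓝[>] 0) (𝓝 Pp) ∧
        Tendsto (fun ε : ℝ => Pmat ρ ((x : ℂ) - ε * I)) (𝓝[>] 0) (𝓝 Pm) ∧
        Pp = Pm * !![(1 : ℂ), -(2 * I / lam); 0, 1]) ∧
      (x < 0 → ∃ Pp Pm : Matrix (Fin 2) (Fin 2) ℂ,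
        Tendsto (fun ε : ℝ => Pmat ρ ((x : ℂ) + ε * I)) (𝓝[>] 0) (𝓝 Pp) ∧
        Tendsto (fun ε : ℝ => Pmat ρ ((x : ℂ) - ε * I)) (𝓝[>] 0) (𝓝 Pm) ∧
        Pp = Pm * !![(1 : ℂ), 0; 2 * I / lam, 1]) := by
  have hl : lam ≠ 0 := by
    rw [hlam]
    simp [hsin]
  have h2 : 2 * I / lam
      = Complex.exp (-(Real.pi * I * ρ)) - Complex.exp (Real.pi * I * ρ) := by
    have hstep : 2 * I / lam = -(2 * I * Complex.sin (Real.pi * ρ)) := by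
      rw [hlam]; field_simp
    rw [hstep, Complex.sin,
      show -(↑Real.pi * ρ) * I = -(↑Real.pi * I * ρ) from by ring,
      show (↑Real.pi * ρ) * I = ↑Real.pi * I * ρ from by ring]
    linear_combination (-(Complex.exp (-(↑Real.pi * I * ρ))
      - Complex.exp (↑Real.pi * I * ρ))) * Complex.I_sq
  intro x
  constructor
  · intro hx
    refine ⟨!![(x : ℂ) ^ ρ, 0; 0, (x : ℂ) ^ (-ρ)] * Cplus ρ,
      !![(x : ℂ) ^ ρ, 0; 0, (x : ℂ) ^ (-ρ)] * Cminus ρ, ?_, ?_, ?_⟩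
    · refine (key13 (Cplus ρ) (tpos13 x hx ρ) (tpos13 x hx (-ρ))).congr' ?_
      filter_upwards [self_mem_nhdsWithin] with ε hε
      simp only [Set.mem_Ioi] at hε
      have him : ((x : ℂ) + ε * I).im = ε := by simp
      rw [Pmat, him, if_pos hε]
    · refine (key13 (Cminus ρ) (tpos13' x hx ρ) (tpos13' x hx (-ρ))).congr' ?_
      filter_upwards [self_mem_nhdsWithin] with ε hε
      simp only [Set.mem_Ioi] at hε
      have him : ((x : ℂ) - ε * I).im = -ε := by simp
      rw [Pmat, him, if_neg (by linarith)]
    · rw [h2, Matrix.mul_assoc, ← algpos13]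
  · intro hx
    refine ⟨!![Complex.exp (((Real.log |x| : ℂ) + Real.pi * I) * ρ), 0; 0,
        Complex.exp (((Real.log |x| : ℂ) + Real.pi * I) * (-ρ))] * Cplus ρ,
      !![Complex.exp (((Real.log |x| : ℂ) - Real.pi * I) * ρ), 0; 0,
        Complex.exp (((Real.log |x| : ℂ) - Real.pi * I) * (-ρ))] * Cminus ρ, ?_, ?_, ?_⟩
    · refine (key13 (Cplus ρ) (tneg13 x hx ρ) (tneg13 x hx (-ρ))).congr' ?_
      filter_upwards [self_mem_nhdsWithin] with ε hε
      simp only [Set.mem_Ioi] at hε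
      have him : ((x : ℂ) + ε * I).im = ε := by simp
      rw [Pmat, him, if_pos hε]
    · refine (key13 (Cminus ρ) (tneg13' x hx ρ) (tneg13' x hx (-ρ))).congr' ?_
      filter_upwards [self_mem_nhdsWithin] with ε hε
      simp only [Set.mem_Ioi] at hε
      have him : ((x : ℂ) - ε * I).im = -ε := by simp
      rw [Pmat, him, if_neg (by linarith)]
    · rw [h2, algneg13]
end

section
/- Let b₁ < b₂ < ... < b_{2n} be real numbers and define β_od(z) = ∏_{j=1}^n (z − b_{2j−1}), β_ev(z) = ∏_{j=1}^n (z − b_{2j}), and Q(x) = β_ev'(x)β_od(x) − β_ev(x)β_od'(x). Then Q(x) > 0 for all x ∈ ℝ, and Q is bounded away from zero on ℝ. -/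
open Polynomial Finset

lemma interp (n : ℕ) (hn : 0 < n) (a : Fin n → ℝ) (ha : Function.Injective a) (q : ℝ[X])
    (hqm : q.Monic) (hqd : q.degree = n) :
    q = (∏ i, (X - C (a i))) + ∑ j, C (q.eval (a j) /
        (∏ k ∈ univ.erase j, (X - C (a k))).eval (a j)) * ∏ k ∈ univ.erase j, (X - C (a k)) := by
  classical
  set p : ℝ[X] := ∏ i, (X - C (a i)) with hp
  set P : Fin n → ℝ[X] := fun j => ∏ k ∈ univ.erase j, (X - C (a k)) with hPdef
  set t : Fin n → ℝ := fun j => q.eval (a j) / (P j).eval (a j) with ht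
  have hPeval : ∀ j x, (P j).eval x = ∏ k ∈ univ.erase j, (x - a k) := by
    intro j x; simp [hPdef, eval_prod]
  have hD : ∀ j, (P j).eval (a j) ≠ 0 := by
    intro j
    rw [hPeval]
    exact prod_ne_zero_iff.2 fun k hk => sub_ne_zero.2 fun h => (mem_erase.1 hk).1 (ha h.symm)
  have hpm : p.Monic := monic_prod_of_monic _ _ fun i _ => monic_X_sub_C _
  have hpd : p.degree = n := by
    rw [hp, degree_prod]; simp [degree_X_sub_C]
  have hPd : ∀ j, (P j).degree < n := by
    intro j
    rw [hPdef, degree_prod]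
    simp only [degree_X_sub_C, sum_const, nsmul_eq_mul, mul_one]
    rw [card_erase_of_mem (mem_univ j), card_univ, Fintype.card_fin]
    exact_mod_cast Nat.cast_lt.2 (by omega : n - 1 < n)
  set R : ℝ[X] := q - p - ∑ j, C (t j) * P j with hR
  have hRd : R.degree < (#(univ : Finset (Fin n)) : ℕ) := by
    rw [card_univ, Fintype.card_fin]
    have h1 : (q - p).degree < n := by
      have := degree_sub_lt (hqd.trans hpd.symm) hqm.ne_zero
        (by rw [hqm.leadingCoeff, hpm.leadingCoeff])
      rwa [hqd] at this
    have h2 : (∑ j, C (t j) * P j).degree < n := by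
      refine lt_of_le_of_lt (degree_sum_le _ _) ?_
      rw [Finset.sup_lt_iff (by exact_mod_cast WithBot.bot_lt_coe n)]
      intro j _
      calc (C (t j) * P j).degree ≤ (C (t j)).degree + (P j).degree := degree_mul_le _ _
        _ ≤ 0 + (P j).degree := add_le_add degree_C_le le_rfl
        _ = (P j).degree := zero_add _
        _ < n := hPd j
    exact lt_of_le_of_lt (degree_sub_le _ _) (max_lt h1 h2)
  have hReval : ∀ i ∈ (univ : Finset (Fin n)), R.eval (a i) = 0 := by
    intro i _
    have hpz : p.eval (a i) = 0 := by
      rw [hp, eval_prod]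
      exact prod_eq_zero (mem_univ i) (by simp)
    have hsum : (∑ j, C (t j) * P j).eval (a i) = t i * (P i).eval (a i) := by
      rw [eval_finset_sum]
      rw [Finset.sum_eq_single_of_mem (f := fun j => eval (a i) (C (t j) * P j)) i (mem_univ i) (fun j _ hj => ?_), eval_mul, eval_C]
      have : (P j).eval (a i) = 0 := by
        rw [hPeval]
        exact prod_eq_zero (mem_erase.2 ⟨fun h => hj (by rw [h]), mem_univ i⟩) (by simp)
      simp [this]
    rw [hR]
    simp only [eval_sub, hpz, hsum]
    simp only [ht]
    rw [div_mul_cancel₀ _ (hD i)]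
    ring
  have : R = 0 := eq_zero_of_degree_lt_of_eval_index_eq_zero univ (ha.injOn) hRd hReval
  rwa [hR, sub_sub, sub_eq_zero] at this

/-- Let `a i` (the odd-indexed points `b_{2i-1}`) and `c i` (the
even-indexed points `b_{2i}`) be interlaced: `a 0 < c 0 < a 1 < c 1 < ⋯`.  With
`β_od(x) = ∏ (x - a i)`, `β_ev(x) = ∏ (x - c i)` and
`Q = β_ev'·β_od − β_ev·β_od'`, one has `Q(x) > 0` for all real `x`, and `Q` is
bounded away from zero on `ℝ`. -/
theorem stmt15 (n : ℕ) (hn : 0 < n) (a c : Fin n → ℝ)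
    (h1 : ∀ i, a i < c i) (h2 : ∀ i j, i < j → c i < a j) :
    ∃ δ : ℝ, 0 < δ ∧ ∀ x : ℝ,
      δ ≤ deriv (fun t : ℝ => ∏ i, (t - c i)) x * (∏ i, (x - a i))
            - (∏ i, (x - c i)) * deriv (fun t : ℝ => ∏ i, (t - a i)) x := by
  classical
  have ha_lt : ∀ i j : Fin n, i < j → a i < a j :=
    fun i j hij => (h1 i).trans (h2 i j hij)
  have ha_inj : Function.Injective a := by
    intro i j h
    rcases lt_trichotomy i j with hij | hij | hij
    · exact absurd h (ne_of_lt (ha_lt i j hij))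
    · exact hij
    · exact absurd h.symm (ne_of_lt (ha_lt j i hij))
  set p : ℝ[X] := ∏ i, (X - C (a i)) with hp
  set q : ℝ[X] := ∏ i, (X - C (c i)) with hq
  set P : Fin n → ℝ[X] := fun j => ∏ k ∈ univ.erase j, (X - C (a k)) with hPdef
  set t : Fin n → ℝ := fun j => q.eval (a j) / (P j).eval (a j) with ht
  have hPeval : ∀ j x, (P j).eval x = ∏ k ∈ univ.erase j, (x - a k) := by
    intro j x; simp [hPdef, eval_prod]
  have hpeval : ∀ x, p.eval x = ∏ i, (x - a i) := by
    intro x; simp [hp, eval_prod]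
  have hqeval : ∀ x, q.eval x = ∏ i, (x - c i) := by
    intro x; simp [hq, eval_prod]
  have hD : ∀ j, (P j).eval (a j) ≠ 0 := by
    intro j
    rw [hPeval]
    exact prod_ne_zero_iff.2 fun k hk => sub_ne_zero.2 fun h => (mem_erase.1 hk).1 (ha_inj h.symm)
  -- sign of weights
  have hw : ∀ j, 0 < -(t j) := by
    intro j
    have hED : q.eval (a j) * (P j).eval (a j) < 0 := by
      rw [hqeval, hPeval, ← mul_prod_erase univ (fun k => a j - c k) (mem_univ j),
        mul_assoc, ← prod_mul_distrib]
      have hprod : 0 < ∏ k ∈ univ.erase j, (a j - c k) * (a j - a k) := by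
        refine prod_pos fun k hk => ?_
        rcases lt_trichotomy k j with hkj | hkj | hkj
        · exact mul_pos (sub_pos.2 (h2 k j hkj)) (sub_pos.2 (ha_lt k j hkj))
        · exact absurd hkj (mem_erase.1 hk).1
        · exact mul_pos_of_neg_of_neg
            (sub_neg.2 ((h1 j).trans ((h2 j k hkj).trans (h1 k))))
            (sub_neg.2 (ha_lt j k hkj))
      exact mul_neg_of_neg_of_pos (sub_neg.2 (h1 j)) hprod
    have hDsq : (0:ℝ) < (P j).eval (a j) ^ 2 := pow_two_pos_of_ne_zero (hD j)
    have h' : q.eval (a j) / (P j).eval (a j) < 0 := by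
      have heq : q.eval (a j) * (P j).eval (a j) / (P j).eval (a j) ^ 2
          = q.eval (a j) / (P j).eval (a j) := by
        rw [pow_two, mul_div_mul_right _ _ (hD j)]
      rw [← heq]
      exact div_neg_of_neg_of_pos hED hDsq
    have : t j < 0 := by simpa [ht] using h'
    linarith
  -- interpolation identity
  have hqm : q.Monic := monic_prod_of_monic _ _ fun i _ => monic_X_sub_C _
  have hqd : q.degree = n := by rw [hq, degree_prod]; simp [degree_X_sub_C]
  have hA : q = p + ∑ j, C (t j) * P j := interp n hn a ha_inj q hqm hqd
  -- Q as sum of squares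
  have hQ : q.derivative * p - q * p.derivative = ∑ j, C (-(t j)) * (P j) ^ 2 := by
    have hfac : ∀ j, p = (X - C (a j)) * P j :=
      fun j => (mul_prod_erase univ _ (mem_univ j)).symm
    have key : ∀ j, (P j).derivative * p - P j * p.derivative = -((P j) ^ 2) := by
      intro j
      have hdp : p.derivative = P j + (X - C (a j)) * (P j).derivative := by
        rw [hfac j, derivative_mul, derivative_X_sub_C, one_mul]
      rw [hdp, hfac j]; ring
    calc q.derivative * p - q * p.derivative
        = (p.derivative + ∑ j, C (t j) * (P j).derivative) * p
          - (p + ∑ j, C (t j) * P j) * p.derivative := by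
          rw [← hA]
          congr 1
          rw [hA]
          simp [derivative_sum]
      _ = ∑ j, C (t j) * ((P j).derivative * p - P j * p.derivative) := by
          have hterm : ∀ j : Fin n, C (t j) * ((P j).derivative * p - P j * p.derivative)
              = (C (t j) * (P j).derivative) * p - (C (t j) * P j) * p.derivative :=
            fun j => by ring
          rw [sum_congr rfl (fun j _ => hterm j), sum_sub_distrib, ← sum_mul, ← sum_mul]
          ring
      _ = ∑ j, C (-(t j)) * (P j) ^ 2 := by
          refine Finset.sum_congr rfl fun j _ => ?_
          rw [key j, map_neg]
          ring
  -- pointwise formula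
  set g : ℝ → ℝ := fun x => q.derivative.eval x * p.eval x - q.eval x * p.derivative.eval x
    with hg
  have hQx : ∀ x, g x = ∑ j, (-(t j)) * ((P j).eval x) ^ 2 := by
    intro x
    have := congrArg (eval x) hQ
    simpa [hg, eval_finset_sum] using this
  have hnonneg : ∀ x, ∀ j ∈ (univ : Finset (Fin n)), 0 ≤ (-(t j)) * ((P j).eval x) ^ 2 :=
    fun x j _ => mul_nonneg (le_of_lt (hw j)) (sq_nonneg _)
  -- positivity everywhere
  have hpos : ∀ x, 0 < g x := by
    intro x
    rw [hQx]
    refine Finset.sum_pos' (hnonneg x) ?_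
    by_cases hx : ∃ m, x = a m
    · obtain ⟨m, rfl⟩ := hx
      exact ⟨m, mem_univ m, mul_pos (hw m) (pow_two_pos_of_ne_zero (hD m))⟩
    · push_neg at hx
      refine ⟨⟨0, hn⟩, mem_univ _, mul_pos (hw _) (pow_two_pos_of_ne_zero ?_)⟩
      rw [hPeval]
      exact prod_ne_zero_iff.2 fun k _ => sub_ne_zero.2 (hx k)
  set j0 : Fin n := ⟨0, hn⟩ with hj0
  set M : ℝ := 1 + ∑ k, |a k| with hM
  have hMpos : (0:ℝ) < M := by
    have : (0:ℝ) ≤ ∑ k, |a k| := sum_nonneg fun k _ => abs_nonneg _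
    linarith
  -- far bound
  have hfar : ∀ x : ℝ, M ≤ |x| → -(t j0) ≤ g x := by
    intro x hx
    have hfac1 : (1:ℝ) ≤ ((P j0).eval x) ^ 2 := by
      rw [hPeval, ← prod_pow]
      rw [show (1:ℝ) = ∏ k ∈ univ.erase j0, (1:ℝ) by simp]
      refine Finset.prod_le_prod (fun k _ => zero_le_one) fun k _ => ?_
      have h1k : |a k| ≤ ∑ m, |a m| :=
        Finset.single_le_sum (fun m _ => abs_nonneg (a m)) (mem_univ k)
      have : (1:ℝ) ≤ |x - a k| := by
        have := abs_sub_abs_le_abs_sub x (a k)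
        linarith
      calc (1:ℝ) = 1 ^ 2 := by norm_num
        _ ≤ |x - a k| ^ 2 := by
            apply pow_le_pow_left₀ (by norm_num) this _
        _ = (x - a k) ^ 2 := sq_abs _
    calc -(t j0) = -(t j0) * 1 := (mul_one _).symm
      _ ≤ -(t j0) * ((P j0).eval x) ^ 2 := by
          exact mul_le_mul_of_nonneg_left hfac1 (le_of_lt (hw j0))
      _ ≤ ∑ j, (-(t j)) * ((P j).eval x) ^ 2 :=
          Finset.single_le_sum (hnonneg x) (mem_univ j0)
      _ = g x := (hQx x).symm
  -- compact part
  have hgcont : Continuous g :=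
    ((q.derivative.continuous).mul (p.continuous)).sub
      ((q.continuous).mul (p.derivative.continuous))
  obtain ⟨x0, hx0K, hx0min⟩ := (isCompact_Icc (a := -M) (b := M)).exists_isMinOn
    ⟨0, by constructor <;> linarith⟩ hgcont.continuousOn
  refine ⟨min (-(t j0)) (g x0), lt_min (hw j0) (hpos x0), fun x => ?_⟩
  have hderivc : deriv (fun t : ℝ => ∏ i, (t - c i)) x = q.derivative.eval x := by
    have he : (fun t : ℝ => ∏ i, (t - c i)) = fun t => q.eval t :=
      funext fun t => (hqeval t).symm
    rw [he, Polynomial.deriv]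
  have hderiva : deriv (fun t : ℝ => ∏ i, (t - a i)) x = p.derivative.eval x := by
    have he : (fun t : ℝ => ∏ i, (t - a i)) = fun t => p.eval t :=
      funext fun t => (hpeval t).symm
    rw [he, Polynomial.deriv]
  rw [hderivc, hderiva, ← hpeval, ← hqeval]
  show min (-(t j0)) (g x0) ≤ g x
  rcases le_or_gt (|x|) M with hxM | hxM
  · have hxK : x ∈ Set.Icc (-M) M := by
      rcases abs_le.1 hxM with ⟨h1', h2'⟩
      exact ⟨h1', h2'⟩
    exact le_trans (min_le_right _ _) (hx0min hxK)
  · exact le_trans (min_le_left _ _) (hfar x (le_of_lt hxM))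
end
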